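/- Let κ be an infinite cardinal. Assume that X is a regular (T3, including T1) topological space such that t(X) ≤ κ and every open cover of X of size at most 2^κ admits a subcover of size at most κ. Then every open cover of X admits a subcover of size at most κ, i.e. ℓ(X) ≤ κ. -/

import Mathlib

open Set Cardinal Topology

universe u v

/-- A space is quasi-Lindelöf if every open cover has a countable subcover
(no separation axioms assumed). -/
def QuasiLindelofSp (X : Type u) [TopologicalSpace X] : Prop :=
  ∀ 𝒰 : Set (Set X), (∀ U ∈ 𝒰, IsOpen U) → ⋃₀ 𝒰 = Set.univ →
    ∃ 𝒱 ⊆ 𝒰, 𝒱.Countable ∧ ⋃₀ 𝒱 = Set.univ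

/-- Lindelöf in the sense of Engelking: regular (T3, including T1) and
every open cover has a countable subcover. -/
def EngLindelofSp (X : Type u) [TopologicalSpace X] : Prop :=
  RegularSpace X ∧ T1Space X ∧ QuasiLindelofSp X

/-- X is productively Lindelöf if X × Y is Lindelöf for every Lindelöf space Y. -/
def ProductivelyLindelofSp (X : Type u) [TopologicalSpace X] : Prop :=
  ∀ (Y : Type u) [TopologicalSpace Y], EngLindelofSp Y → EngLindelofSp (X × Y)

/-- X is productively quasi-Lindelöf if X × Y is quasi-Lindelöf for every Lindelöf space Y. -/
def ProductivelyQuasiLindelofSp (X : Type u) [TopologicalSpace X] : Prop :=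
  ∀ (Y : Type u) [TopologicalSpace Y], EngLindelofSp Y → QuasiLindelofSp (X × Y)

/-- X is powerfully Lindelöf if X^ω is Lindelöf. -/
def PowerfullyLindelofSp (X : Type u) [TopologicalSpace X] : Prop :=
  EngLindelofSp (ℕ → X)

/-- X is powerfully quasi-Lindelöf if X^ω is quasi-Lindelöf. -/
def PowerfullyQuasiLindelofSp (X : Type u) [TopologicalSpace X] : Prop :=
  QuasiLindelofSp (ℕ → X)

/-- Tightness of X is at most κ. -/
def TightnessLE (X : Type u) [TopologicalSpace X] (κ : Cardinal.{u}) : Prop :=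
  ∀ (A : Set X) (x : X), x ∈ closure A → ∃ B ⊆ A, #B ≤ κ ∧ x ∈ closure B

/-- X has countable tightness. -/
def CountableTightness (X : Type u) [TopologicalSpace X] : Prop :=
  ∀ (A : Set X) (x : X), x ∈ closure A → ∃ B ⊆ A, B.Countable ∧ x ∈ closure B

/-- The Lindelöf number of X is at most κ: every open cover has a subcover of size ≤ κ. -/
def LindelofNumberLE (X : Type u) [TopologicalSpace X] (κ : Cardinal.{u}) : Prop :=
  ∀ 𝒰 : Set (Set X), (∀ U ∈ 𝒰, IsOpen U) → ⋃₀ 𝒰 = Set.univ →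
    ∃ 𝒱 ⊆ 𝒰, #𝒱 ≤ κ ∧ ⋃₀ 𝒱 = Set.univ

/-- The weight of X is at most κ: there is a base of size ≤ κ. -/
def WeightLE (X : Type u) [TopologicalSpace X] (κ : Cardinal.{u}) : Prop :=
  ∃ B : Set (Set X), TopologicalSpace.IsTopologicalBasis B ∧ #B ≤ κ

/-- N is a network for X. -/
def IsNetwork (X : Type u) [TopologicalSpace X] (N : Set (Set X)) : Prop :=
  ∀ (x : X) (U : Set X), IsOpen U → x ∈ U → ∃ n ∈ N, x ∈ n ∧ n ⊆ U

/-- X is linearly Lindelöf: regular (incl. T1) and every open cover linearly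
ordered by inclusion has a countable subcover. -/
def LinearlyLindelofSp (X : Type u) [TopologicalSpace X] : Prop :=
  RegularSpace X ∧ T1Space X ∧
    ∀ 𝒰 : Set (Set X), (∀ U ∈ 𝒰, IsOpen U) → IsChain (· ⊆ ·) 𝒰 → ⋃₀ 𝒰 = Set.univ →
      ∃ 𝒱 ⊆ 𝒰, 𝒱.Countable ∧ ⋃₀ 𝒱 = Set.univ

/-- U ⊆ X^ω is a basic open set: a product of open sets, all but finitely many of
which equal X. -/
def IsBasicOpen (X : Type u) [TopologicalSpace X] (U : Set (ℕ → X)) : Prop :=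
  ∃ V : ℕ → Set X, (∀ i, IsOpen (V i)) ∧ {i | V i ≠ Set.univ}.Finite ∧
    U = Set.pi Set.univ V

/-- A family of subsets of Z is point-κ if every point belongs to at most κ members. -/
def PointLE {Z : Type u} (𝒲 : Set (Set Z)) (κ : Cardinal.{u}) : Prop :=
  ∀ z : Z, #({W ∈ 𝒲 | z ∈ W}) ≤ κ

/-- A non-empty space is zero-dimensional if it is T1 and has a base of clopen sets. -/
def ZeroDimensionalSp (Y : Type u) [TopologicalSpace Y] : Prop :=
  Nonempty Y ∧ T1Space Y ∧
    ∃ B : Set (Set Y), TopologicalSpace.IsTopologicalBasis B ∧ ∀ b ∈ B, IsClopen b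

theorem auxStar7 {X : Type u} [TopologicalSpace X] {κ : Cardinal.{u}} (hκ : ℵ₀ ≤ κ)
    (hreg : RegularSpace X) {𝒰 : Set (Set X)} (hopen : ∀ U ∈ 𝒰, IsOpen U)
    (hcov : ⋃₀ 𝒰 = Set.univ)
    (hsmall : ∀ 𝒲 : Set (Set X), (∀ U ∈ 𝒲, IsOpen U) → ⋃₀ 𝒲 = Set.univ →
      #𝒲 ≤ 2 ^ κ → ∃ 𝒱 ⊆ 𝒲, #𝒱 ≤ κ ∧ ⋃₀ 𝒱 = Set.univ)
    (A : Set X) (hA : #A ≤ κ) :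
    ∃ 𝒱 ⊆ 𝒰, #𝒱 ≤ κ ∧ closure A ⊆ ⋃₀ 𝒱 := by
  haveI := hreg
  by_cases hne : Nonempty X
  swap
  · exact ⟨∅, empty_subset _, by simp, fun y _ => (hne ⟨y⟩).elim⟩
  have hchoice : ∀ x : X, x ∈ closure A → ∃ U V : Set X, U ∈ 𝒰 ∧ IsOpen V ∧ x ∈ V ∧
      closure V ⊆ U := by
    intro x _
    have hx : x ∈ ⋃₀ 𝒰 := by rw [hcov]; trivial
    obtain ⟨U, hU𝒰, hxU⟩ := hx
    obtain ⟨t, ht, htc, hts⟩ := exists_mem_nhds_isClosed_subset ((hopen U hU𝒰).mem_nhds hxU)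
    exact ⟨U, interior t, hU𝒰, isOpen_interior, mem_interior_iff_mem_nhds.2 ht,
      (closure_minimal interior_subset htc).trans hts⟩
  choose! U V hU𝒰 hVopen hxV hclV using hchoice
  obtain ⟨U₀, hU₀⟩ : ∃ U₀, U₀ ∈ 𝒰 := by
    obtain ⟨x⟩ := hne
    have hx : x ∈ ⋃₀ 𝒰 := by rw [hcov]; trivial
    exact ⟨hx.choose, hx.choose_spec.1⟩
  classical
  let W : Set ↥A → Set X := fun T =>
    if h : ∃ x ∈ closure A, (Subtype.val ⁻¹' (V x) : Set ↥A) = T then U h.choose else U₀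
  have hWmem : ∀ T, W T ∈ 𝒰 := by
    intro T
    simp only [W]
    split
    · next h => exact hU𝒰 _ h.choose_spec.1
    · exact hU₀
  set 𝒲 : Set (Set X) := insert (closure A)ᶜ (range W) with h𝒲
  have h𝒲open : ∀ S ∈ 𝒲, IsOpen S := by
    rintro S (rfl | ⟨T, rfl⟩)
    · exact isClosed_closure.isOpen_compl
    · exact hopen _ (hWmem T)
  have h𝒲cov : ⋃₀ 𝒲 = Set.univ := by
    apply eq_univ_of_forall
    intro y
    by_cases hy : y ∈ closure A
    · have hEx : ∃ x ∈ closure A, (Subtype.val ⁻¹' (V x) : Set ↥A) =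
          (Subtype.val ⁻¹' (V y) : Set ↥A) := ⟨y, hy, rfl⟩
      obtain ⟨hx1, hx2⟩ := hEx.choose_spec
      have htr : A ∩ V hEx.choose = A ∩ V y := Subtype.preimage_coe_eq_preimage_coe_iff.1 hx2
      have hy2 : y ∈ closure (A ∩ V y) := by
        have hy' := hy
        rw [mem_closure_iff_nhds] at hy' ⊢
        intro t htn
        obtain ⟨z, ⟨hzt, hzv⟩, hza⟩ :=
          hy' (t ∩ V y) (Filter.inter_mem htn ((hVopen y hy).mem_nhds (hxV y hy)))
        exact ⟨z, hzt, hza, hzv⟩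
      refine ⟨W (Subtype.val ⁻¹' (V y)), Or.inr ⟨_, rfl⟩, ?_⟩
      have hWT : W (Subtype.val ⁻¹' (V y)) = U hEx.choose := dif_pos hEx
      rw [hWT]
      refine ((closure_mono (inter_subset_right (s := A))).trans (hclV _ hx1)) ?_
      rw [htr]; exact hy2
    · exact ⟨(closure A)ᶜ, Or.inl rfl, hy⟩
  have h2κ : ℵ₀ ≤ 2 ^ κ := hκ.trans (cantor κ).le
  have h𝒲card : #𝒲 ≤ 2 ^ κ := by
    have h1 : #(range W) ≤ 2 ^ κ := by
      refine mk_range_le.trans ?_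
      rw [mk_set]
      exact power_le_power_left two_ne_zero hA
    calc #𝒲 ≤ #(range W) + 1 := mk_insert_le
    _ ≤ 2 ^ κ + 2 ^ κ := add_le_add h1 (le_trans (by norm_num) h2κ)
    _ = 2 ^ κ := add_eq_self h2κ
  obtain ⟨𝒱', h𝒱'sub, h𝒱'card, h𝒱'cov⟩ := hsmall 𝒲 h𝒲open h𝒲cov h𝒲card
  refine ⟨𝒱' ∩ 𝒰, inter_subset_right, le_trans (mk_le_mk_of_subset inter_subset_left) h𝒱'card, ?_⟩
  intro y hy
  have : y ∈ ⋃₀ 𝒱' := by rw [h𝒱'cov]; trivial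
  obtain ⟨S, hS, hyS⟩ := this
  rcases h𝒱'sub hS with rfl | ⟨T, rfl⟩
  · exact absurd hy hyS
  · exact ⟨W T, ⟨hS, hWmem T⟩, hyS⟩

noncomputable abbrev Stmt7Idx (κ : Cardinal.{u}) : Type u := (Order.succ κ).ord.ToType

lemma stmt7_mk_Iio (κ : Cardinal.{u}) (α : Stmt7Idx κ) : #(Set.Iio α) ≤ κ :=
  Order.lt_succ_iff.1 (Cardinal.mk_Iio_ord_toType (c := Order.succ κ) α)

lemma stmt7_mk_Iic (κ : Cardinal.{u}) (hκ : ℵ₀ ≤ κ) (α : Stmt7Idx κ) : #(Set.Iic α) ≤ κ := by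
  rw [← Set.Iio_insert]
  refine le_trans mk_insert_le ?_
  calc #(Set.Iio α) + 1 ≤ κ + κ := add_le_add (stmt7_mk_Iio κ α) (le_trans (by norm_num) hκ)
  _ = κ := add_eq_self hκ

lemma stmt7_bdd (κ : Cardinal.{u}) (hκ : ℵ₀ ≤ κ) (s : Set (Stmt7Idx κ)) (hs : #s ≤ κ) :
    ∃ b : Stmt7Idx κ, ∀ a ∈ s, a < b := by
  haveI : IsWellOrder (Stmt7Idx κ) (· < ·) := isWellOrder_lt
  have h1 : #s < Ordinal.cof (Ordinal.type ((· < ·) : Stmt7Idx κ → Stmt7Idx κ → Prop)) := by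
    rw [Ordinal.type_toType]
    exact lt_of_le_of_lt hs (lt_of_lt_of_le (Order.lt_succ κ) (Cardinal.isRegular_succ hκ).2)
  exact not_isCofinal_iff.1 fun hc => (Order.cof_le hc).not_gt (by rwa [Ordinal.cof_type] at h1)

lemma stmt7_mk_idx (κ : Cardinal.{u}) : #(Stmt7Idx κ) = Order.succ κ :=
  Cardinal.mk_ord_toType _

/-- Let κ be infinite and X a regular space with t(X) ≤ κ such that every
open cover of size at most 2^κ has a subcover of size at most κ. Then ℓ(X) ≤ κ. -/
theorem stmt7 (X : Type u) [TopologicalSpace X] (κ : Cardinal.{u}) (hκ : ℵ₀ ≤ κ)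
    (hreg : RegularSpace X) (ht1 : T1Space X) (ht : TightnessLE X κ)
    (hsmall : ∀ 𝒰 : Set (Set X), (∀ U ∈ 𝒰, IsOpen U) → ⋃₀ 𝒰 = Set.univ →
      #𝒰 ≤ 2 ^ κ → ∃ 𝒱 ⊆ 𝒰, #𝒱 ≤ κ ∧ ⋃₀ 𝒱 = Set.univ) :
    LindelofNumberLE X κ := by
  intro 𝒰 hopen hcov
  by_contra hno
  push_neg at hno
  classical
  have hpick : ∀ 𝒱 : Set (Set X), 𝒱 ⊆ 𝒰 → #𝒱 ≤ κ → ∃ p : X, p ∉ ⋃₀ 𝒱 := by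
    intro 𝒱 h1 h2
    have h3 := hno 𝒱 h1 h2
    by_contra h4
    push_neg at h4
    exact h3 (eq_univ_of_forall h4)
  haveI hne : Nonempty X := ⟨(hpick ∅ (empty_subset _) (by simp)).choose⟩
  have hstar := fun A hA => auxStar7 hκ hreg hopen hcov hsmall A hA
  obtain ⟨Vf, hVfsub, hVfcard, hVfcl⟩ : ∃ Vf : Set X → Set (Set X),
      (∀ A : Set X, Vf A ⊆ 𝒰) ∧ (∀ A : Set X, #(Vf A) ≤ κ) ∧ (∀ A : Set X, #A ≤ κ → closure A ⊆ ⋃₀ Vf A) := by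
    refine ⟨fun A => if h : #A ≤ κ then (hstar A h).choose else ∅, ?_, ?_, ?_⟩
    · intro A
      dsimp only
      split
      · next h => exact (hstar A h).choose_spec.1
      · exact empty_subset _
    · intro A
      dsimp only
      split
      · next h => exact (hstar A h).choose_spec.2.1
      · simp
    · intro A h
      dsimp only
      rw [dif_pos h]
      exact (hstar A h).choose_spec.2.2
  -- existence of a point avoiding any stage's union
  have hEx : ∀ (α : Stmt7Idx κ) (g : Stmt7Idx κ → X),
      ∃ p : X, p ∉ ⋃₀ (⋃ β ∈ Set.Iic α, Vf (g '' Set.Iio β)) := by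
    intro α g
    apply hpick
    · exact iUnion_subset fun β => iUnion_subset fun _ => hVfsub _
    · refine le_trans (mk_biUnion_le _ _) ?_
      haveI : Nonempty ↥(Set.Iic α) := ⟨⟨α, Set.self_mem_Iic⟩⟩
      calc #(Set.Iic α) * ⨆ β : ↥(Set.Iic α), #(Vf (g '' Set.Iio β.1))
          ≤ κ * κ := mul_le_mul' (stmt7_mk_Iic κ hκ α) (ciSup_le' fun β => hVfcard _)
      _ = κ := mul_eq_self hκ
  -- the transfinite sequence
  obtain ⟨x, hxeq⟩ : ∃ x : Stmt7Idx κ → X, ∀ α, x α =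
      (hEx α (fun γ => if h : γ < α then x γ else hne.some)).choose := by
    refine ⟨WellFounded.fix wellFounded_lt
      (fun α ih => (hEx α (fun γ => if h : γ < α then ih γ h else hne.some)).choose),
      fun α => ?_⟩
    exact WellFounded.fix_eq _ _ α
  have hxspec : ∀ α : Stmt7Idx κ, x α ∉ ⋃₀ (⋃ β ∈ Set.Iic α,
      Vf ((fun γ => if _ : γ < α then x γ else hne.some) '' Set.Iio β)) := by
    intro α
    rw [hxeq α]
    exact (hEx α _).choose_spec
  have himg : ∀ (α β : Stmt7Idx κ), β ≤ α →
      ((fun γ => if _ : γ < α then x γ else hne.some) '' Set.Iio β) = x '' Set.Iio β := by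
    intro α β hβ
    apply Set.image_congr
    intro γ hγ
    rw [dif_pos (lt_of_lt_of_le hγ hβ)]
  have hKey : ∀ (α β : Stmt7Idx κ), β ≤ α → x α ∉ ⋃₀ Vf (x '' Set.Iio β) := by
    intro α β hβα hmem
    obtain ⟨Wt, hW, hxW⟩ := hmem
    refine hxspec α ⟨Wt, ?_, hxW⟩
    refine Set.mem_biUnion (Set.mem_Iic.2 hβα) ?_
    rw [himg α β hβα]
    exact hW
  -- the final cover
  set 𝒲 : Set (Set X) := insert (closure (range x))ᶜ (⋃ β : Stmt7Idx κ, Vf (x '' Set.Iio β))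
    with h𝒲
  have h𝒲open : ∀ S ∈ 𝒲, IsOpen S := by
    intro S hS
    rcases Set.mem_insert_iff.1 hS with rfl | hS2
    · exact isClosed_closure.isOpen_compl
    · obtain ⟨β, hβ⟩ := Set.mem_iUnion.1 hS2
      exact hopen _ (hVfsub _ hβ)
  have h𝒲cov : ⋃₀ 𝒲 = Set.univ := by
    apply eq_univ_of_forall
    intro y
    by_cases hy : y ∈ closure (range x)
    · obtain ⟨B, hBsub, hBcard, hyB⟩ := ht (range x) y hy
      have hchoose : ∀ b : ↥B, ∃ i : Stmt7Idx κ, x i = b.1 := fun b => hBsub b.2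
      choose idx hidx using hchoose
      obtain ⟨β, hβ⟩ := stmt7_bdd κ hκ (range idx) (le_trans mk_range_le hBcard)
      have hBsub2 : B ⊆ x '' Set.Iio β := by
        intro b hb
        exact ⟨idx ⟨b, hb⟩, hβ _ (mem_range_self _), hidx ⟨b, hb⟩⟩
      have hy2 : y ∈ ⋃₀ Vf (x '' Set.Iio β) :=
        hVfcl _ (le_trans mk_image_le (stmt7_mk_Iio κ β)) ((closure_mono hBsub2) hyB)
      obtain ⟨W, hW, hyW⟩ := hy2
      exact ⟨W, Set.mem_insert_iff.2 (Or.inr (Set.mem_iUnion.2 ⟨β, hW⟩)), hyW⟩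
    · exact ⟨(closure (range x))ᶜ, Set.mem_insert_iff.2 (Or.inl rfl), hy⟩
  have h2κ : ℵ₀ ≤ 2 ^ κ := hκ.trans (cantor κ).le
  have hsucc : Order.succ κ ≤ 2 ^ κ := Order.succ_le_of_lt (cantor κ)
  have h𝒲card : #𝒲 ≤ 2 ^ κ := by
    have hU : #(⋃ β : Stmt7Idx κ, Vf (x '' Set.Iio β)) ≤ 2 ^ κ := by
      refine le_trans (mk_iUnion_le _) ?_
      haveI : Nonempty (Stmt7Idx κ) := by
        rw [← mk_ne_zero_iff, stmt7_mk_idx]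
        exact ne_of_gt (lt_of_lt_of_le (lt_of_lt_of_le aleph0_pos hκ) (Order.le_succ κ))
      calc #(Stmt7Idx κ) * ⨆ β : Stmt7Idx κ, #(Vf (x '' Set.Iio β))
          ≤ Order.succ κ * κ := mul_le_mul' (le_of_eq (stmt7_mk_idx κ)) (ciSup_le' fun β => hVfcard _)
      _ ≤ 2 ^ κ * 2 ^ κ := mul_le_mul' hsucc (cantor κ).le
      _ = 2 ^ κ := mul_eq_self h2κ
    calc #𝒲 ≤ #(⋃ β : Stmt7Idx κ, Vf (x '' Set.Iio β)) + 1 := mk_insert_le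
    _ ≤ 2 ^ κ + 2 ^ κ := add_le_add hU (le_trans (by norm_num) h2κ)
    _ = 2 ^ κ := add_eq_self h2κ
  obtain ⟨𝒱', h𝒱'sub, h𝒱'card, h𝒱'cov⟩ := hsmall 𝒲 h𝒲open h𝒲cov h𝒲card
  have hchoose2 : ∀ W : ↥{W : Set X | W ∈ 𝒱' ∧ ∃ β : Stmt7Idx κ, W ∈ Vf (x '' Set.Iio β)},
      ∃ β : Stmt7Idx κ, W.1 ∈ Vf (x '' Set.Iio β) := fun W => W.2.2
  choose bfun hbfun using hchoose2
  have hTcard : #(range bfun) ≤ κ :=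
    le_trans mk_range_le (le_trans (mk_le_mk_of_subset (fun W hW => hW.1)) h𝒱'card)
  obtain ⟨αs, hαs⟩ := stmt7_bdd κ hκ (range bfun) hTcard
  have hmem : x αs ∈ ⋃₀ 𝒱' := by rw [h𝒱'cov]; trivial
  obtain ⟨W, hW𝒱', hxW⟩ := hmem
  rcases Set.mem_insert_iff.1 (h𝒱'sub hW𝒱') with rfl | hWun
  · exact hxW (subset_closure (mem_range_self αs))
  · obtain ⟨β₀, hβ₀⟩ := Set.mem_iUnion.1 hWun
    have hWT : W ∈ {W : Set X | W ∈ 𝒱' ∧ ∃ β : Stmt7Idx κ, W ∈ Vf (x '' Set.Iio β)} :=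
      ⟨hW𝒱', ⟨β₀, hβ₀⟩⟩
    have hb := hbfun ⟨W, hWT⟩
    have hlt : bfun ⟨W, hWT⟩ < αs := hαs _ (mem_range_self _)
    exact hKey αs _ hlt.le ⟨W, hb, hxW⟩
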